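/- Let λ ∈ ℂ be a root of λ² + λw + s² = 0 with Re λ < 0, Im λ ≠ 0, where w ∈ ℂ satisfies |Im w| ≤ k·Re w (k ≥ 0), Re w > 0, and 0 ≤ s² ≤ (1/δ)·Re w for some δ > 0. Then |λ|²·(|Im λ| - k|Re λ|) ≤ (2/δ)|Re λ||Im λ|. -/

import Mathlib

/-- algebraic core of Theorem 6.2 (iii). -/
theorem stmt_8 (k δ : ℝ) (hk : 0 ≤ k) (hδ : 0 < δ)
    (w : ℂ) (hw : 0 < w.re) (hsec : |w.im| ≤ k * w.re)
    (s : ℝ) (hs : s ^ 2 ≤ (1 / δ) * w.re)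
    (lam : ℂ) (heq : lam ^ 2 + lam * w + (s : ℂ) ^ 2 = 0)
    (hre : lam.re < 0) (him : lam.im ≠ 0) :
    ‖lam‖ ^ 2 * (|lam.im| - k * |lam.re|) ≤
      (2 / δ) * |lam.re| * |lam.im| := by
  set A := lam.re with hA
  set B := lam.im with hB
  have hR : A ^ 2 - B ^ 2 + (A * w.re - B * w.im) + s ^ 2 = 0 := by
    have := congrArg Complex.re heq
    simp [Complex.add_re, Complex.mul_re, Complex.mul_im, pow_two] at this
    ring_nf at this ⊢
    linarith
  have hI : 2 * A * B + (A * w.im + B * w.re) = 0 := by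
    have := congrArg Complex.im heq
    simp [Complex.add_im, Complex.mul_re, Complex.mul_im, pow_two] at this
    ring_nf at this ⊢
    linarith
  set m := A ^ 2 + B ^ 2 with hm
  set t := s ^ 2 with ht
  have hmpos : 0 < m := by positivity
  have ht0 : 0 ≤ t := sq_nonneg s
  have hwre : m * w.re = -A * (m + t) := by linear_combination A * hR + B * hI
  have hwim : m * w.im = B * (t - m) := by linear_combination A * hI - B * hR
  set a := -A with ha
  set b := |B| with hb
  have hapos : 0 < a := by simp [ha]; linarith
  have hbpos : 0 < b := abs_pos.mpr him
  -- F1 : b * (m - t) ≤ k * a * (m + t)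
  have hF1 : b * (m - t) ≤ k * a * (m + t) := by
    have h1 : b * |t - m| = m * |w.im| := by
      rw [hb, ← abs_mul, ← hwim, abs_mul, abs_of_pos hmpos]
    have h2 : m * |w.im| ≤ m * (k * w.re) :=
      mul_le_mul_of_nonneg_left hsec hmpos.le
    have h3 : m * (k * w.re) = k * a * (m + t) := by linear_combination k * hwre
    have h4 : b * (m - t) ≤ b * |t - m| := by
      apply mul_le_mul_of_nonneg_left _ hbpos.le
      rw [abs_sub_comm]
      exact le_abs_self _
    linarith
  -- F2 : t * m ≤ (1/δ) * a * (m + t)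
  have hF2 : t * m ≤ (1 / δ) * a * (m + t) := by
    have h1 : t * m ≤ ((1 / δ) * w.re) * m :=
      mul_le_mul_of_nonneg_right hs hmpos.le
    have h2 : ((1 / δ) * w.re) * m = (1 / δ) * a * (m + t) := by
      linear_combination (1 / δ) * hwre
    linarith
  -- rewrite goal
  have habs : ‖lam‖ ^ 2 = m := by
    rw [Complex.sq_norm, Complex.normSq_apply, hm]; ring
  have hAabs : |lam.re| = a := by rw [← hA, abs_of_neg hre]
  rw [habs, hAabs]
  -- final : m * (b - k*a) ≤ (2/δ) * a * b
  have key : m * (b - k * a) * (m + t) ≤ 2 * b * (t * m) := by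
    nlinarith [mul_le_mul_of_nonneg_left hF1 hmpos.le]
  have key2 : 2 * b * (t * m) ≤ 2 / δ * a * b * (m + t) := by
    have h := mul_le_mul_of_nonneg_left hF2 (by positivity : (0:ℝ) ≤ 2 * b)
    have he : 2 * b * (1 / δ * a * (m + t)) = 2 / δ * a * b * (m + t) := by ring
    linarith
  have hmt : 0 < m + t := by linarith
  exact le_of_mul_le_mul_right (key.trans key2) hmt
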